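/- Let F be a field and n ≤ p be positive integers with p ≥ 2. Let α : Mat_{n,p}(F) → F be an affine map (i.e., α(M) = ℓ(M) + c for some linear form ℓ and constant c) such that α(M) = 0 for every matrix M of rank n. Then α is identically zero. -/

import Mathlib

open Matrix

/-- If a column-submatrix of `A` (selected by `σ`) is invertible, then `A` has full rank `n`. -/
lemma rank_eq_of_submatrix_isUnit {F : Type*} [Field F] {n p : ℕ}
    (σ : Fin n → Fin p) (A : Matrix (Fin n) (Fin p) F)
    (h : IsUnit (A.submatrix id σ)) : A.rank = n := by
  have hQ : A * (Matrix.of fun l k => if σ k = l then (1:F) else 0) = A.submatrix id σ := by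
    ext a k
    simp [Matrix.mul_apply, Matrix.submatrix_apply]
  have h1 : (A.submatrix id σ).rank = n := by
    simpa using Matrix.rank_of_isUnit _ h
  have h2 : (A.submatrix id σ).rank ≤ A.rank := by
    rw [← hQ]; exact Matrix.rank_mul_le_left _ _
  have h3 : A.rank ≤ n := A.rank_le_height
  omega

/-- For `0 < n ≤ p` with `p ≥ 2`, an affine map `α : Mat_{n,p}(F) → F` (written
`M ↦ ℓ(M) + c` with `ℓ` linear and `c` constant) that vanishes at every matrix of
rank `n` vanishes identically. -/
theorem affine_map_vanishing_on_full_rank (F : Type*) [Field F]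
    (n p : ℕ) (hn : 0 < n) (hnp : n ≤ p) (hp : 2 ≤ p)
    (ℓ : Matrix (Fin n) (Fin p) F →ₗ[F] F) (c : F)
    (hvan : ∀ M : Matrix (Fin n) (Fin p) F, M.rank = n → ℓ M + c = 0) :
    ∀ M : Matrix (Fin n) (Fin p) F, ℓ M + c = 0 := by
  have hp0 : 0 < p := by omega
  -- For each (i, j) we produce two full-rank matrices whose difference is E_{ij}.
  have key : ∀ (i : Fin n) (j : Fin p), ℓ (Matrix.single i j 1) = 0 := by
    intro i j
    -- choose j' ≠ j
    obtain ⟨j', hj'⟩ : ∃ j' : Fin p, j' ≠ j := by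
      haveI : Nontrivial (Fin p) := Fin.nontrivial_iff_two_le.mpr hp
      exact exists_ne j
    set e : Equiv.Perm (Fin p) :=
      if Fin.castLE hnp i = j then Equiv.swap j j' else Equiv.refl _ with he
    set σ : Fin n → Fin p := fun k => e (Fin.castLE hnp k) with hσ
    have hσinj : Function.Injective σ := by
      intro a b hab
      exact Fin.castLE_injective hnp (e.injective hab)
    have hσi : σ i ≠ j := by
      by_cases hc : Fin.castLE hnp i = j
      · simp [hσ, he, hc, Equiv.swap_apply_left, hj']
      · simp [hσ, he, hc]
    set B : Matrix (Fin n) (Fin p) F :=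
      Matrix.of (fun k l => if σ k = l then (1:F) else 0) with hB
    have hBsub : B.submatrix id σ = 1 := by
      ext a b
      by_cases hab : a = b
      · simp [hB, hab, Matrix.one_apply]
      · have : σ a ≠ σ b := fun h => hab (hσinj h)
        simp [hB, Matrix.one_apply, hab, this]
    have hBrank : B.rank = n :=
      rank_eq_of_submatrix_isUnit σ B (by rw [hBsub]; exact isUnit_one)
    set A : Matrix (Fin n) (Fin p) F := B + Matrix.single i j 1 with hA
    have hArank : A.rank = n := by
      apply rank_eq_of_submatrix_isUnit σ
      by_cases hjr : ∃ k, σ k = j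
      · obtain ⟨k0, hk0⟩ := hjr
        have hik0 : i ≠ k0 := fun h => hσi (h ▸ hk0)
        have : A.submatrix id σ = Matrix.transvection i k0 1 := by
          rw [Matrix.transvection]
          ext a b
          have h1 : Matrix.single i j (1:F) a (σ b) = Matrix.single i k0 (1:F) a b := by
            by_cases ha : i = a
            · by_cases hb : k0 = b
              · simp [ha, hb, ← hk0, Matrix.single]
              · have : j ≠ σ b := fun h => hb (hσinj (hk0.trans h))
                simp [Matrix.single, ha, hb, this]
            · simp [Matrix.single, ha]
          simp only [hA, Matrix.submatrix_apply, Matrix.add_apply, id]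
          rw [h1]
          congr 1
          have := congrFun (congrFun hBsub a) b
          simpa [Matrix.submatrix_apply] using this
        rw [this]
        rw [Matrix.isUnit_iff_isUnit_det, Matrix.det_transvection_of_ne _ _ hik0]
        exact isUnit_one
      · push_neg at hjr
        have : A.submatrix id σ = 1 := by
          ext a b
          have h1 : Matrix.single i j (1:F) a (σ b) = 0 := by
            have : j ≠ σ b := fun h => hjr b h.symm
            simp [Matrix.single, this]
          simp only [hA, Matrix.submatrix_apply, Matrix.add_apply, id, h1, add_zero]
          have := congrFun (congrFun hBsub a) b
          simpa [Matrix.submatrix_apply] using this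
        rw [this]; exact isUnit_one
    have h1 := hvan A hArank
    have h2 := hvan B hBrank
    have hE : ℓ (Matrix.single i j 1) = 0 := by
      have : ℓ A = ℓ B + ℓ (Matrix.single i j 1) := by rw [hA, map_add]
      rw [this] at h1
      linear_combination h1 - h2
    exact hE
  -- ℓ vanishes everywhere
  have hL : ∀ M : Matrix (Fin n) (Fin p) F, ℓ M = 0 := by
    intro M
    rw [Matrix.matrix_eq_sum_single M]
    rw [map_sum]
    refine Finset.sum_eq_zero fun k _ => ?_
    rw [map_sum]
    refine Finset.sum_eq_zero fun l _ => ?_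
    have : Matrix.single k l (M k l) = M k l • Matrix.single k l 1 := by
      rw [Matrix.smul_single, smul_eq_mul, mul_one]
    rw [this, _root_.map_smul, key k l, smul_zero]
  -- one full-rank matrix to pin down c
  have hc : c = 0 := by
    set B0 : Matrix (Fin n) (Fin p) F :=
      Matrix.of (fun k l => if Fin.castLE hnp k = l then (1:F) else 0) with hB0
    have hsub : B0.submatrix id (Fin.castLE hnp) = 1 := by
      ext a b
      by_cases hab : a = b
      · simp [hB0, hab, Matrix.one_apply]
      · have : Fin.castLE hnp a ≠ Fin.castLE hnp b :=
          fun h => hab (Fin.castLE_injective hnp h)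
        simp [hB0, Matrix.one_apply, hab, this]
    have hr : B0.rank = n :=
      rank_eq_of_submatrix_isUnit _ B0 (by rw [hsub]; exact isUnit_one)
    have := hvan B0 hr
    rw [hL B0, zero_add] at this
    exact this
  intro M
  rw [hL M, hc, add_zero]
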